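/- arXiv:0704.1701 — 2 statements merged into one kernel-verified Lean document; each statement's English description precedes it below -/
import Mathlib

section
/- Let K be a field whose prime field is F, with char F ≠ 2, and let m ≥ 3 be an integer. Let ζ be a primitive 2^m-th root of unity in an algebraic closure of K, assume [K(ζ) : K] = 2, and let λ be the non-trivial K-automorphism of K(ζ). If λ(ζ) = ζ^{-1} or λ(ζ) = -ζ^{-1}, then K(ζ) = K(ζ_4), where ζ_4 = ζ^{2^{m-2}} is a primitive 4-th root of unity, and moreover K ∩ F(ζ_4) = F (the intersection taken inside K(ζ)). -/
set_option synthInstance.maxHeartbeats 1000000 in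
set_option maxHeartbeats 1000000 in
open IntermediateField in
/-- **Lemma 2.4.** Let `K` be a field with prime field `F` of characteristic `≠ 2`, and
`m ≥ 3`.  Let `ζ` be a primitive `2^m`-th root of unity in an algebraic closure of `K` with
`[K(ζ) : K] = 2`, and let `λ` be the non-trivial `K`-automorphism of `K(ζ)`.  If
`λ(ζ) = ζ⁻¹` or `λ(ζ) = -ζ⁻¹`, then `K(ζ) = K(ζ₄)` where `ζ₄ = ζ^(2^(m-2))` is a primitive
4-th root of unity, and `K ∩ F(ζ₄) = F` (inside the algebraic closure, with `F` the prime
subfield). -/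
theorem adjoin_eq_adjoin_fourth_root_and_inf_bot
    (K : Type) [Field K] (hchar : ringChar K ≠ 2)
    (m : ℕ) (hm : 3 ≤ m)
    (ζ : AlgebraicClosure K) (hζ : IsPrimitiveRoot ζ (2 ^ m))
    (hdeg : Module.finrank K
      (IntermediateField.adjoin K ({ζ} : Set (AlgebraicClosure K))) = 2)
    (lam : IntermediateField.adjoin K ({ζ} : Set (AlgebraicClosure K)) ≃ₐ[K]
      IntermediateField.adjoin K ({ζ} : Set (AlgebraicClosure K)))
    (hlam : lam ≠ AlgEquiv.refl)
    (hact : lam ⟨ζ, IntermediateField.mem_adjoin_simple_self K ζ⟩ =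
        (⟨ζ, IntermediateField.mem_adjoin_simple_self K ζ⟩ :
          IntermediateField.adjoin K ({ζ} : Set (AlgebraicClosure K)))⁻¹ ∨
      lam ⟨ζ, IntermediateField.mem_adjoin_simple_self K ζ⟩ =
        -(⟨ζ, IntermediateField.mem_adjoin_simple_self K ζ⟩ :
          IntermediateField.adjoin K ({ζ} : Set (AlgebraicClosure K)))⁻¹) :
    IntermediateField.adjoin K ({ζ} : Set (AlgebraicClosure K)) =
      IntermediateField.adjoin K ({ζ ^ 2 ^ (m - 2)} : Set (AlgebraicClosure K)) ∧
    (algebraMap K (AlgebraicClosure K)).fieldRange ⊓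
      Subfield.closure {ζ ^ 2 ^ (m - 2)} = ⊥ := by
  set ζ' : K⟮ζ⟯ := (⟨ζ, IntermediateField.mem_adjoin_simple_self K ζ⟩ : K⟮ζ⟯) with hζ'def
  set i : AlgebraicClosure K := ζ ^ 2 ^ (m - 2) with hidef
  -- characteristic facts
  have h2K : (2 : K) ≠ 0 := Ring.two_ne_zero hchar
  have h2A : (2 : (AlgebraicClosure K)) ≠ 0 := by
    have := (algebraMap K (AlgebraicClosure K)).injective
    intro h
    apply h2K
    apply this
    rw [map_ofNat, map_zero, h]
  have h2L : (2 : K⟮ζ⟯) ≠ 0 := by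
    intro h
    apply h2A
    have := congrArg (Subtype.val) h
    push_cast at this
    exact this
  -- i is a primitive 4th root of unity
  have hprod : 2 ^ m = 2 ^ (m - 2) * 4 := by
    have hm' : m = (m - 2) + 2 := by omega
    calc 2 ^ m = 2 ^ ((m - 2) + 2) := by rw [← hm']
    _ = 2 ^ (m - 2) * 4 := by ring
  have hi4 : IsPrimitiveRoot i 4 := hζ.pow (by positivity) hprod
  have hine : i ≠ 0 := hi4.ne_zero (by norm_num)
  have hisq : i ^ 2 = -1 := by
    have h2 : IsPrimitiveRoot (i ^ 2) 2 := hi4.pow (by norm_num) (by norm_num)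
    exact h2.eq_neg_one_of_two_right
  have hiL : i ∈ K⟮ζ⟯ := by
    rw [hidef]
    exact pow_mem (IntermediateField.mem_adjoin_simple_self K ζ) _
  set i' : K⟮ζ⟯ := (⟨i, hiL⟩ : K⟮ζ⟯) with hi'def
  have hi'pow : i' = ζ' ^ 2 ^ (m - 2) := by
    apply Subtype.ext
    push_cast
    rfl
  have hi'sq : i' ^ 2 = -1 := by
    apply Subtype.ext
    push_cast
    exact hisq
  have hi'ne : i' ≠ 0 := by
    intro h
    exact hine (congrArg Subtype.val h)
  have hi'inv : i'⁻¹ = -i' := by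
    apply inv_eq_of_mul_eq_one_right
    have : i' * -i' = -(i' ^ 2) := by ring
    rw [this, hi'sq, neg_neg]
  -- λ(i) = -i
  have heven : Even (2 ^ (m - 2)) := by
    refine ⟨2 ^ (m - 3), ?_⟩
    have hm' : m - 2 = (m - 3) + 1 := by omega
    rw [hm', pow_succ]
    ring
  have hlami : lam i' = -i' := by
    rw [hi'pow, map_pow]
    rcases hact with h | h
    · rw [h, inv_pow, ← hi'pow, hi'inv]
    · rw [h, heven.neg_pow, inv_pow, ← hi'pow, hi'inv]
  have hneg_ne : -i' ≠ i' := by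
    intro h
    apply hi'ne
    have h2 : (2 : K⟮ζ⟯) * i' = 0 := by
      linear_combination -h
    rcases mul_eq_zero.mp h2 with h | h
    · exact absurd h h2L
    · exact h
  -- i ∉ range of algebraMap K (AlgebraicClosure K)
  have hiK : ∀ c : K, algebraMap K (AlgebraicClosure K) c ≠ i := by
    intro c hc
    have hc' : algebraMap K K⟮ζ⟯ c = i' := by
      apply Subtype.ext
      exact hc
    have := lam.commutes c
    rw [hc', hlami] at this
    exact hneg_ne this
  constructor
  · -- first conjunct : adjoin K {ζ} = adjoin K {i}
    haveI hfd : FiniteDimensional K K⟮ζ⟯ := FiniteDimensional.of_finrank_eq_succ hdeg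
    have hint : IsIntegral K i := by
      refine ⟨Polynomial.X ^ 2 + 1, ?_, ?_⟩
      · apply Polynomial.monic_X_pow_add_C
        norm_num
      · simp [Polynomial.eval₂_pow, hisq]
    have hMle : IntermediateField.adjoin K ({i} : Set (AlgebraicClosure K)) ≤ K⟮ζ⟯ := by
      rw [IntermediateField.adjoin_le_iff]
      simpa using hiL
    have hminpoly_dvd : minpoly K i ∣ Polynomial.X ^ 2 + 1 := by
      apply minpoly.dvd
      simp [Polynomial.eval₂_pow, hisq]
    have hnd : (Polynomial.X ^ 2 + 1 : Polynomial K).natDegree = 2 := by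
      compute_degree!
    have hXne : (Polynomial.X ^ 2 + 1 : Polynomial K) ≠ 0 := by
      intro h
      rw [h] at hnd
      simp at hnd
    have hdle : (minpoly K i).natDegree ≤ 2 := by
      have := Polynomial.natDegree_le_of_dvd hminpoly_dvd hXne
      rwa [hnd] at this
    have hfinM : Module.finrank K (IntermediateField.adjoin K ({i} : Set (AlgebraicClosure K))) = 2 := by
      rw [IntermediateField.adjoin.finrank hint]
      have hpos : 0 < (minpoly K i).natDegree := minpoly.natDegree_pos hint
      interval_cases h : (minpoly K i).natDegree
      · -- degree 1 : i ∈ K, contradiction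
        exfalso
        have hbot : IntermediateField.adjoin K ({i} : Set (AlgebraicClosure K)) = ⊥ := by
          rw [← IntermediateField.finrank_eq_one_iff,
            IntermediateField.adjoin.finrank hint, h]
        have : i ∈ (⊥ : IntermediateField K (AlgebraicClosure K)) := by
          rw [← hbot]
          exact IntermediateField.mem_adjoin_simple_self K i
        rw [IntermediateField.mem_bot] at this
        obtain ⟨c, hc⟩ := this
        exact hiK c hc
      · rfl
    symm
    haveI : FiniteDimensional K K⟮ζ⟯ := hfd
    apply IntermediateField.eq_of_le_of_finrank_eq hMle
    rw [hfinM, hdeg]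
  · -- second conjunct
    have hibot : i ∉ (⊥ : Subfield (AlgebraicClosure K)) := by
      intro h
      have : i ∈ (algebraMap K (AlgebraicClosure K)).fieldRange :=
        (bot_le (a := (algebraMap K (AlgebraicClosure K)).fieldRange)) h
      rw [RingHom.mem_fieldRange] at this
      obtain ⟨c, hc⟩ := this
      exact hiK c hc
    -- description of closure {i}
    have key : ∀ x ∈ Subfield.closure ({i} : Set (AlgebraicClosure K)),
        ∃ a b : AlgebraicClosure K, a ∈ (⊥ : Subfield (AlgebraicClosure K)) ∧ b ∈ (⊥ : Subfield (AlgebraicClosure K)) ∧ x = a + b * i := by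
      intro x hx
      induction hx using Subfield.closure_induction with
      | mem y hy =>
        rw [Set.mem_singleton_iff] at hy
        exact ⟨0, 1, zero_mem _, one_mem _, by rw [hy]; ring⟩
      | one => exact ⟨1, 0, one_mem _, zero_mem _, by ring⟩
      | add y z hy hz ihy ihz =>
        obtain ⟨a, b, ha, hb, rfl⟩ := ihy
        obtain ⟨c, d, hc, hd, rfl⟩ := ihz
        exact ⟨a + c, b + d, add_mem ha hc, add_mem hb hd, by ring⟩
      | neg y hy ihy =>
        obtain ⟨a, b, ha, hb, rfl⟩ := ihy
        exact ⟨-a, -b, neg_mem ha, neg_mem hb, by ring⟩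
      | mul y z hy hz ihy ihz =>
        obtain ⟨a, b, ha, hb, rfl⟩ := ihy
        obtain ⟨c, d, hc, hd, rfl⟩ := ihz
        refine ⟨a * c - b * d, a * d + b * c, ?_, ?_, ?_⟩
        · exact sub_mem (mul_mem ha hc) (mul_mem hb hd)
        · exact add_mem (mul_mem ha hd) (mul_mem hb hc)
        · have : (a + b * i) * (c + d * i) =
            a * c + b * d * i ^ 2 + (a * d + b * c) * i := by ring
          rw [this, hisq]
          ring
      | inv y hy ihy =>
        obtain ⟨a, b, ha, hb, rfl⟩ := ihy
        by_cases hzero : a + b * i = 0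
        · exact ⟨0, 0, zero_mem _, zero_mem _, by rw [hzero]; simp⟩
        · have hs : a ^ 2 + b ^ 2 ≠ 0 := by
            intro hsum
            by_cases hb0 : b = 0
            · rw [hb0] at hsum
              simp at hsum
              apply hzero
              rw [hb0, hsum]
              ring
            · have hc2 : (a * b⁻¹) ^ 2 = -1 := by
                field_simp
                linear_combination hsum
              have : (a * b⁻¹ - i) * (a * b⁻¹ + i) = 0 := by
                have : (a * b⁻¹ - i) * (a * b⁻¹ + i) = (a * b⁻¹) ^ 2 - i ^ 2 := by ring
                rw [this, hc2, hisq]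
                ring
              have hmem : a * b⁻¹ ∈ (⊥ : Subfield (AlgebraicClosure K)) := mul_mem ha (inv_mem hb)
              rcases mul_eq_zero.mp this with h | h
              · apply hibot
                have : i = a * b⁻¹ := by linear_combination -h
                rw [this]; exact hmem
              · apply hibot
                have : i = -(a * b⁻¹) := by linear_combination h
                rw [this]; exact neg_mem hmem
          refine ⟨a * (a ^ 2 + b ^ 2)⁻¹, -b * (a ^ 2 + b ^ 2)⁻¹, ?_, ?_, ?_⟩
          · exact mul_mem ha (inv_mem (add_mem (pow_mem ha 2) (pow_mem hb 2)))
          · exact mul_mem (neg_mem hb) (inv_mem (add_mem (pow_mem ha 2) (pow_mem hb 2)))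
          · apply inv_eq_of_mul_eq_one_right
            have expand : (a + b * i) * (a * (a ^ 2 + b ^ 2)⁻¹ + -b * (a ^ 2 + b ^ 2)⁻¹ * i)
                = (a ^ 2 - b ^ 2 * i ^ 2) * (a ^ 2 + b ^ 2)⁻¹ := by ring
            rw [expand, hisq]
            field_simp
            ring
    -- conclude
    apply le_antisymm
    · rintro x ⟨hx1, hx2⟩
      have hx1' : x ∈ (algebraMap K (AlgebraicClosure K)).fieldRange := hx1
      have hx2' : x ∈ Subfield.closure ({i} : Set (AlgebraicClosure K)) := hx2
      clear hx1 hx2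
      obtain ⟨a, b, ha, hb, rfl⟩ := key x hx2'
      -- a, b are in the image of K
      have haK : a ∈ (algebraMap K (AlgebraicClosure K)).fieldRange :=
        (bot_le (a := (algebraMap K (AlgebraicClosure K)).fieldRange)) ha
      have hbK : b ∈ (algebraMap K (AlgebraicClosure K)).fieldRange :=
        (bot_le (a := (algebraMap K (AlgebraicClosure K)).fieldRange)) hb
      rw [RingHom.mem_fieldRange] at haK hbK hx1'
      obtain ⟨ca, hca⟩ := haK
      obtain ⟨cb, hcb⟩ := hbK
      obtain ⟨c, hc⟩ := hx1'
      -- move to L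
      have hEqL : algebraMap K K⟮ζ⟯ c = algebraMap K K⟮ζ⟯ ca + algebraMap K K⟮ζ⟯ cb * i' := by
        apply Subtype.ext
        push_cast
        show algebraMap K (AlgebraicClosure K) c = algebraMap K (AlgebraicClosure K) ca + algebraMap K (AlgebraicClosure K) cb * i
        rw [hca, hcb, hc]
      have hEqL2 := congrArg lam hEqL
      rw [map_add, map_mul, lam.commutes, lam.commutes, lam.commutes, hlami] at hEqL2
      rw [hEqL] at hEqL2
      have hcb0 : algebraMap K K⟮ζ⟯ cb * i' = 0 := by
        have h2i : (2 : K⟮ζ⟯) * (algebraMap K K⟮ζ⟯ cb * i') = 0 := by linear_combination hEqL2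
        rcases mul_eq_zero.mp h2i with h | h
        · exact absurd h h2L
        · exact h
      have hb0 : b = 0 := by
        rcases mul_eq_zero.mp hcb0 with h | h
        · have := congrArg Subtype.val h
          rw [← hcb]
          simpa using this
        · exact absurd h hi'ne
      rw [hb0]
      simpa using ha
    · exact bot_le
end

section
/- Let p be an odd prime, n ≥ 3, and K a field with char K ≠ p. Let ζ be a primitive p^{n-1}-th root of unity in an algebraic closure of K. If [K(ζ) : K] = p, then ζ^p ∈ K; in particular, K contains a primitive p^{n-2}-th root of unity. -/
/-- Lifting-the-exponent consequence: if `p` is an odd prime, `p ∣ a - 1` and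
`p ^ m ∣ a ^ p - 1`, then `p ^ (m - 1) ∣ a - 1`. -/
lemma aux_pow_dvd_sub_one (p m : ℕ) (hp : p.Prime) (hodd : Odd p) (a : ℤ)
    (h1 : (p : ℤ) ∣ a - 1) (h : (p : ℤ) ^ m ∣ a ^ p - 1) :
    (p : ℤ) ^ (m - 1) ∣ a - 1 := by
  rcases eq_or_ne a 1 with rfl | ha
  · simp
  have hpa : ¬ (p : ℤ) ∣ a := by
    intro hd
    have h1' : (p : ℤ) ∣ 1 := by
      have := dvd_sub hd h1
      simpa using this
    have : p ∣ 1 := by exact_mod_cast h1'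
    have := Nat.le_of_dvd one_pos this
    have := hp.two_le
    omega
  have hfin : FiniteMultiplicity (p : ℤ) (a - 1) :=
    Int.finiteMultiplicity_iff.mpr ⟨by simpa using hp.ne_one, sub_ne_zero.mpr ha⟩
  have hlte := Int.emultiplicity_pow_sub_pow hp hodd (by simpa using h1) hpa p
  have hm1 : emultiplicity p p = 1 :=
    (Nat.finiteMultiplicity_iff.mpr ⟨hp.ne_one, hp.pos⟩).emultiplicity_self
  have hle : (m : ℕ∞) ≤ emultiplicity (p : ℤ) (a ^ p - 1 ^ p) :=
    le_emultiplicity_of_pow_dvd (by simpa using h)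
  rw [hlte, hm1, hfin.emultiplicity_eq_multiplicity] at hle
  set k := multiplicity (p : ℤ) (a - 1) with hk
  have hle' : m ≤ k + 1 := by exact_mod_cast (by push_cast at hle ⊢; exact_mod_cast hle :
    (m : ℕ∞) ≤ ((k + 1 : ℕ) : ℕ∞))
  apply pow_dvd_of_le_emultiplicity
  rw [hfin.emultiplicity_eq_multiplicity, ← hk]
  exact_mod_cast Nat.cast_le.mpr (by omega : m - 1 ≤ k)

/-- If `p` is an odd prime, `n ≥ 3`, `char K ≠ p`, `ζ` is a primitive `p^(n-1)`-th root of
unity in an algebraic closure of `K` and `[K(ζ) : K] = p`, then `ζ^p ∈ K`; in particular `K`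
contains a primitive `p^(n-2)`-th root of unity. -/
theorem pow_p_mem_of_finrank_eq_p
    (p n : ℕ) (hp : p.Prime) (hodd : Odd p) (hn : 3 ≤ n)
    (K : Type) [Field K] (hchar : ringChar K ≠ p)
    (ζ : AlgebraicClosure K) (hζ : IsPrimitiveRoot ζ (p ^ (n - 1)))
    (hdeg : Module.finrank K
      (IntermediateField.adjoin K ({ζ} : Set (AlgebraicClosure K))) = p) :
    (∃ c : K, algebraMap K (AlgebraicClosure K) c = ζ ^ p) ∧
    ∃ ξ : K, IsPrimitiveRoot ξ (p ^ (n - 2)) := by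
  haveI hfact : Fact p.Prime := ⟨hp⟩
  set N : ℕ := p ^ (n - 1) with hNdef
  have hNpos : 0 < N := pow_pos hp.pos _
  haveI : NeZero N := ⟨hNpos.ne'⟩
  haveI : Fact (1 < N) := ⟨Nat.one_lt_pow (by omega) hp.one_lt⟩
  set L : IntermediateField K (AlgebraicClosure K) := IntermediateField.adjoin K {ζ} with hLdef
  have hζL : ζ ∈ L := IntermediateField.subset_adjoin K _ rfl
  set η : L := ⟨ζ, hζL⟩ with hηdef
  have hη : IsPrimitiveRoot η N := IsPrimitiveRoot.coe_submonoidClass_iff.1 hζ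
  have hint : IsIntegral K ζ :=
    (isAlgebraic_iff_isIntegral).mp (Algebra.IsAlgebraic.isAlgebraic ζ)
  set N' : ℕ+ := ⟨N, hNpos⟩ with hN'def
  haveI hcyc : IsCyclotomicExtension {(N' : ℕ)} K L := by
    have H := IntermediateField.adjoin_simple_toSubalgebra_of_isAlgebraic hint.isAlgebraic
    refine IsCyclotomicExtension.equiv _ _ _ (h := ?_) (.refl : L.toSubalgebra ≃ₐ[K] _)
    rw [show L.toSubalgebra = Algebra.adjoin K {ζ} from H]
    exact (show IsPrimitiveRoot ζ (N' : ℕ) from hζ).adjoin_isCyclotomicExtension K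
  haveI : FiniteDimensional K L := IntermediateField.adjoin.finiteDimensional hint
  haveI : IsGalois K L := IsCyclotomicExtension.isGalois {(N' : ℕ)} K L
  have hfix : ∀ σ : L ≃ₐ[K] L, σ (η ^ p) = η ^ p := by
    intro σ
    have hcard : Fintype.card (L ≃ₐ[K] L) = p := by
      rw [← Nat.card_eq_fintype_card, IsGalois.card_aut_eq_finrank]; exact hdeg
    have hσp : σ ^ p = 1 := by rw [← hcard]; exact pow_card_eq_one
    have hup : hη.autToPow K σ ^ p = 1 := by rw [← map_pow, hσp, map_one]
    set a : ℕ := ((hη.autToPow K σ : ZMod N)).val with ha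
    have hau : ((a : ℕ) : ZMod N) = (hη.autToPow K σ : ZMod N) :=
      ZMod.natCast_rightInverse _
    have hupv : ((hη.autToPow K σ : ZMod N)) ^ p = 1 := by
      have := congrArg (fun u : (ZMod N)ˣ => (u : ZMod N)) hup
      simpa using this
    have hNdvd : (N : ℤ) ∣ (a : ℤ) ^ p - 1 := by
      rw [← ZMod.intCast_zmod_eq_zero_iff_dvd]
      push_cast
      rw [hau, hupv, sub_self]
    have hpdvd : (p : ℤ) ∣ (a : ℤ) - 1 := by
      rw [← ZMod.intCast_zmod_eq_zero_iff_dvd]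
      have hpN : (p : ℤ) ∣ (N : ℤ) := by
        exact_mod_cast Int.natCast_dvd_natCast.mpr (dvd_pow_self p (by omega : n - 1 ≠ 0))
      have h1 : ((a : ZMod p)) ^ p = 1 := by
        have := hpN.trans hNdvd
        rw [← ZMod.intCast_zmod_eq_zero_iff_dvd] at this
        push_cast at this
        rwa [sub_eq_zero] at this
      have h2 : ((a : ZMod p)) ^ p = (a : ZMod p) := ZMod.pow_card _
      push_cast
      rw [sub_eq_zero, ← h1, h2]
    have key : (p : ℤ) ^ (n - 1 - 1) ∣ (a : ℤ) - 1 :=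
      aux_pow_dvd_sub_one p (n - 1) hp hodd _ hpdvd (by simpa [hNdef] using hNdvd)
    have hN2 : (N : ℤ) ∣ (a : ℤ) * p - p := by
      have hmul : ((p : ℤ) ^ (n - 1 - 1)) * p ∣ ((a : ℤ) - 1) * p := mul_dvd_mul key dvd_rfl
      have hNe : (N : ℤ) = (p : ℤ) ^ (n - 1 - 1) * p := by
        rw [hNdef]; push_cast; rw [← pow_succ]; congr 1; omega
      rw [hNe]
      convert hmul using 1; ring
    have ha1 : 1 ≤ a := by
      have hne : ((hη.autToPow K σ : ZMod N)) ≠ 0 := Units.ne_zero _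
      have : a ≠ 0 := fun h0 => hne (by rwa [ZMod.val_eq_zero] at h0)
      omega
    obtain ⟨c, hc⟩ := hN2
    have hca : 0 ≤ (N : ℤ) * c := by
      rw [← hc]
      have h1a : (1 : ℤ) ≤ (a : ℤ) := by exact_mod_cast ha1
      have hp0 : (0 : ℤ) ≤ (p : ℤ) := by positivity
      nlinarith
    have hc0 : 0 ≤ c := by
      by_contra hcneg
      push_neg at hcneg
      have hN0 : (0 : ℤ) < (N : ℤ) := by exact_mod_cast hNpos
      nlinarith
    obtain ⟨k, rfl⟩ := Int.eq_ofNat_of_zero_le hc0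
    have hknat : a * p = p + N * k := by
      have : (a : ℤ) * p = p + N * k := by linarith
      exact_mod_cast this
    have hηN : η ^ N = 1 := hη.pow_eq_one
    calc σ (η ^ p) = (σ η) ^ p := map_pow σ η p
      _ = (η ^ a) ^ p := by rw [hη.autToPow_spec K σ]
      _ = η ^ (a * p) := by rw [← pow_mul]
      _ = η ^ p * (η ^ N) ^ k := by rw [hknat, pow_add, pow_mul]
      _ = η ^ p := by rw [hηN, one_pow, mul_one]
  have hbot : η ^ p ∈ (⊥ : IntermediateField K L) := by
    rw [← IsGalois.fixedField_fixingSubgroup (⊥ : IntermediateField K L)]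
    exact fun g => hfix g
  obtain ⟨c, hc⟩ := IntermediateField.mem_bot.mp hbot
  have hcoe : ((η ^ p : L) : AlgebraicClosure K) = ζ ^ p := by
    push_cast
    rfl
  have hcζ : algebraMap K (AlgebraicClosure K) c = ζ ^ p := by
    have h2 := congrArg (algebraMap L (AlgebraicClosure K)) hc
    rw [← IsScalarTower.algebraMap_apply] at h2
    rw [h2]
    exact hcoe
  refine ⟨⟨c, hcζ⟩, ⟨c, ?_⟩⟩
  have hζp : IsPrimitiveRoot (ζ ^ p) (p ^ (n - 2)) :=
    hζ.pow (pow_pos hp.pos _) (by rw [← pow_succ']; congr 1; omega)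
  rw [← hcζ] at hζp
  exact hζp.of_map_of_injective (algebraMap K (AlgebraicClosure K)).injective
end
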